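/- Let n ≥ 0 and let γ ≥ 0, μ₀ ≥ 0 with γ + μ₀ > 0, η ≥ 0, and μⱼ > 0, ηⱼ > 0 for j = 1,…,n, and let K > 0 (K = 3I₀G/R⁵). Define the complex Love number of the generalized Maxwell rheology by k(σ) = K / (γ + J⁻¹(σ)), where J⁻¹(σ) = μ₀ + iησ + Σ_{j=1}^n iσηⱼμⱼ/(μⱼ + iσηⱼ) for σ ∈ ℝ (so J⁻¹(0) = μ₀). Then for every σ ∈ ℝ one has |k(σ)| ≤ |k(0)| = K/(γ + μ₀). -/

import Mathlib

/-- For the generalized Maxwell rheology with self-gravity `γ`,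
prestress spring `μ₀`, dashpot `η`, Maxwell elements `(μs j, ηs j)` and constant
`K = 3I₀G/R⁵`, the complex Love number `k(σ) = K / (γ + J⁻¹(σ))` satisfies
`|k(σ)| ≤ |k(0)| = K/(γ+μ₀)` for every real frequency `σ`. -/
theorem stmt_0 (n : ℕ) (γ μ₀ η K : ℝ) (μs ηs : Fin n → ℝ)
    (hγ : 0 ≤ γ) (hμ₀ : 0 ≤ μ₀) (hγμ₀ : 0 < γ + μ₀) (hη : 0 ≤ η)
    (hμs : ∀ j, 0 < μs j) (hηs : ∀ j, 0 < ηs j) (hK : 0 < K)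
    (Jinv : ℝ → ℂ)
    (hJinv : ∀ σ : ℝ, Jinv σ =
      (μ₀ : ℂ) + Complex.I * η * σ +
        ∑ j, Complex.I * σ * ηs j * μs j / ((μs j : ℂ) + Complex.I * σ * ηs j))
    (k : ℝ → ℂ) (hk : ∀ σ : ℝ, k σ = K / ((γ : ℂ) + Jinv σ)) :
    (∀ σ : ℝ, ‖k σ‖ ≤ ‖k 0‖) ∧
      ‖k 0‖ = K / (γ + μ₀) := by
  have hk0 : k 0 = (K : ℂ) / ((γ : ℂ) + μ₀) := by
    rw [hk 0, hJinv 0]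
    norm_num
  have habs0 : ‖k 0‖ = K / (γ + μ₀) := by
    rw [hk0]
    rw [show ((γ : ℂ) + μ₀) = ((γ + μ₀ : ℝ) : ℂ) by push_cast; ring]
    rw [norm_div, Complex.norm_real, Complex.norm_real, Real.norm_eq_abs, Real.norm_eq_abs,
      abs_of_pos hK, abs_of_pos hγμ₀]
  refine ⟨fun σ => ?_, habs0⟩
  have hre : γ + μ₀ ≤ ((γ : ℂ) + Jinv σ).re := by
    rw [hJinv σ]
    have hsum : 0 ≤ (∑ j, Complex.I * σ * ηs j * μs j /
        ((μs j : ℂ) + Complex.I * σ * ηs j)).re := by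
      rw [Complex.re_sum]
      apply Finset.sum_nonneg
      intro j _
      have hμ := hμs j
      have hη' := hηs j
      simp only [Complex.div_re, Complex.normSq_apply, Complex.add_re,
        Complex.add_im, Complex.mul_re, Complex.mul_im, Complex.I_re,
        Complex.I_im, Complex.ofReal_re, Complex.ofReal_im]
      ring_nf
      positivity
    simp only [Complex.add_re, Complex.mul_re, Complex.mul_im, Complex.I_re,
      Complex.I_im, Complex.ofReal_re, Complex.ofReal_im]
    nlinarith [hsum]
  have habs_ge : γ + μ₀ ≤ ‖(γ : ℂ) + Jinv σ‖ :=
    le_trans hre (Complex.re_le_norm _)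
  rw [hk σ, habs0, norm_div, Complex.norm_real, Real.norm_eq_abs, abs_of_pos hK]
  exact div_le_div_of_nonneg_left hK.le hγμ₀ habs_ge
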